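/- If every node has degree mᵢ ≥ 1 and 0 ≤ ρ < 1, then the matrix D − ρW is symmetric positive definite. -/

import Mathlib

open Matrix

/-- Degree of node `i`: `mᵢ = ∑ⱼ Wᵢⱼ`. -/
noncomputable def degVec {n : ℕ} (W : Matrix (Fin n) (Fin n) ℝ) (i : Fin n) : ℝ := ∑ j, W i j

/-- `R(ρ) = D - ρ W` where `D = diag(m₁,…,mₙ)`. -/
noncomputable def Rmat {n : ℕ} (W : Matrix (Fin n) (Fin n) ℝ) (ρ : ℝ) :
    Matrix (Fin n) (Fin n) ℝ :=
  Matrix.diagonal (degVec W) - ρ • W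

/-- `K(ρ) = (D-ρW) - (D-ρW)F[Fᵀ(D-ρW)F]⁻¹Fᵀ(D-ρW)`. -/
noncomputable def Kmat {n p : ℕ} (W : Matrix (Fin n) (Fin n) ℝ)
    (F : Matrix (Fin n) (Fin (p + 1)) ℝ) (ρ : ℝ) : Matrix (Fin n) (Fin n) ℝ :=
  Rmat W ρ - Rmat W ρ * F * (Fᵀ * Rmat W ρ * F)⁻¹ * Fᵀ * Rmat W ρ

/-- `T(x,ρ) = xᵀ K(ρ) x`. -/
noncomputable def Tcrit {n p : ℕ} (W : Matrix (Fin n) (Fin n) ℝ)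
    (F : Matrix (Fin n) (Fin (p + 1)) ℝ) (x : Fin n → ℝ) (ρ : ℝ) : ℝ :=
  x ⬝ᵥ (Kmat W F ρ).mulVec x


/-- if every degree is at least 1 and `0 ≤ ρ < 1`, then `D - ρW` is
symmetric positive definite. -/
theorem Rmat_posDef {n : ℕ} (W : Matrix (Fin n) (Fin n) ℝ)
    (hWsymm : W.IsSymm) (hW01 : ∀ i j, W i j = 0 ∨ W i j = 1) (hWdiag : ∀ i, W i i = 0)
    (hdeg : ∀ i, 1 ≤ degVec W i)
    (ρ : ℝ) (hρ0 : 0 ≤ ρ) (hρ1 : ρ < 1) :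
    (Rmat W ρ).IsSymm ∧ (Rmat W ρ).PosDef := by

  have hWnn : ∀ i j, (0:ℝ) ≤ W i j := fun i j => by rcases hW01 i j with h|h <;> simp [h]
  have hsym : ∀ i j, W j i = W i j := fun i j => hWsymm.apply i j
  have hRsymm : (Rmat W ρ).IsSymm := by
    unfold Matrix.IsSymm Rmat
    rw [Matrix.transpose_sub, Matrix.transpose_smul, Matrix.diagonal_transpose, hWsymm]
  refine ⟨hRsymm, Matrix.posDef_iff_dotProduct_mulVec.mpr ⟨?_, ?_⟩⟩
  · show (Rmat W ρ)ᴴ = Rmat W ρ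
    rw [Matrix.conjTranspose_eq_transpose_of_trivial]; exact hRsymm
  · intro x hx
    have hmv : ∀ i, (Rmat W ρ).mulVec x i = degVec W i * x i - ρ * ∑ j, W i j * x j := by
      intro i
      simp [Rmat, Matrix.mulVec, dotProduct, Matrix.sub_apply, Matrix.smul_apply,
        sub_mul, Finset.sum_sub_distrib, Matrix.diagonal_apply, ite_mul, zero_mul,
        Finset.sum_ite_eq, Finset.sum_ite_eq', Finset.mul_sum, mul_assoc]
    have hquad : star x ⬝ᵥ (Rmat W ρ).mulVec x
        = ∑ i, ∑ j, (W i j * x i ^ 2 - ρ * (W i j * (x i * x j))) := by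
      simp only [dotProduct, star, Pi.star_apply, star_trivial, id_eq]
      rw [Finset.sum_congr rfl (fun i _ => by rw [hmv i])]
      refine Finset.sum_congr rfl fun i _ => ?_
      rw [degVec, mul_sub]
      simp only [Finset.mul_sum]
      rw [Finset.sum_mul, Finset.mul_sum, ← Finset.sum_sub_distrib]
      refine Finset.sum_congr rfl fun j _ => by ring
    have hswap : ∑ i, ∑ j, W i j * x i ^ 2 = ∑ i, ∑ j, W i j * x j ^ 2 := by
      rw [Finset.sum_comm]
      exact Finset.sum_congr rfl fun j _ => Finset.sum_congr rfl fun i _ => by rw [hsym i j]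
    have h2 : 2 * (star x ⬝ᵥ (Rmat W ρ).mulVec x)
        = ∑ i, ∑ j, W i j * ((1 - ρ) * (x i ^ 2 + x j ^ 2) + ρ * (x i - x j) ^ 2) := by
      rw [hquad, Finset.mul_sum]
      simp only [Finset.mul_sum]
      have key : ∑ i, ∑ j, (2 * (W i j * x i ^ 2 - ρ * (W i j * (x i * x j)))
          - W i j * ((1 - ρ) * (x i ^ 2 + x j ^ 2) + ρ * (x i - x j) ^ 2))
          = (0:ℝ) := by
        rw [Finset.sum_congr rfl fun i _ => Finset.sum_congr rfl fun j _ =>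
          (by ring : 2 * (W i j * x i ^ 2 - ρ * (W i j * (x i * x j)))
            - W i j * ((1 - ρ) * (x i ^ 2 + x j ^ 2) + ρ * (x i - x j) ^ 2)
            = W i j * x i ^ 2 - W i j * x j ^ 2)]
        simp only [Finset.sum_sub_distrib]
        rw [hswap, sub_self]
      simp only [Finset.sum_sub_distrib] at key
      linarith
    have hterm : ∀ i j, 0 ≤ W i j * ((1 - ρ) * (x i ^ 2 + x j ^ 2) + ρ * (x i - x j) ^ 2) := by
      intro i j
      apply mul_nonneg (hWnn i j)
      have h1 : (0:ℝ) ≤ 1 - ρ := by linarith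
      positivity
    obtain ⟨i0, hi0⟩ := Function.ne_iff.mp hx
    have hj0 : ∃ j0, 0 < W i0 j0 := by
      by_contra h
      push_neg at h
      have : degVec W i0 ≤ 0 := Finset.sum_nonpos (fun j _ => h j)
      linarith [hdeg i0]
    obtain ⟨j0, hj0⟩ := hj0
    have hpos : 0 < 2 * (star x ⬝ᵥ (Rmat W ρ).mulVec x) := by
      rw [h2]
      refine Finset.sum_pos' (fun i _ => Finset.sum_nonneg fun j _ => hterm i j)
        ⟨i0, Finset.mem_univ i0, ?_⟩
      refine Finset.sum_pos' (fun j _ => hterm i0 j) ⟨j0, Finset.mem_univ j0, ?_⟩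
      apply mul_pos hj0
      have h1 : (0:ℝ) < 1 - ρ := by linarith
      have hne : x i0 ≠ 0 := by simpa using hi0
      have h2' : (0:ℝ) < x i0 ^ 2 := by positivity
      nlinarith [sq_nonneg (x j0), sq_nonneg (x i0 - x j0)]
    linarith
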